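/- Let k ≥ 1 and t ≥ 2 be integers. If 𝓕 is a k-uniform family of finite sets with more than k!(t-1)^k·(1 - ∑_{s=1}^{k-1} s/((s+1)!·(t-1)^s)) members, then 𝓕 contains a sunflower with t petals, i.e., t pairwise distinct members F₁,...,F_t of 𝓕 such that Fᵢ ∩ Fⱼ = F₁ ∩ F₂ ∩ ... ∩ F_t for all 1 ≤ i < j ≤ t. -/

import Mathlib

open Finset

private def Nb (t : ℕ) : ℕ → ℕ
  | 0 => 1
  | (k+1) => (k+1)*(t-1)*Nb t k - k*(t-1)

private lemma Nb_ge (t : ℕ) (ht : 2 ≤ t) : ∀ k, 1 ≤ Nb t k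
  | 0 => le_refl _
  | (k+1) => by
      have h := Nb_ge t ht k
      show 1 ≤ (k+1)*(t-1)*Nb t k - k*(t-1)
      have h1 : (k+1)*(t-1)*1 ≤ (k+1)*(t-1)*Nb t k := Nat.mul_le_mul_left _ h
      have h2 : (k+1)*(t-1)*1 = k*(t-1) + (t-1) := by ring
      generalize (k+1)*(t-1)*Nb t k = A at *
      generalize k*(t-1) = B at *
      omega

private lemma Nb_sub_le (t : ℕ) (ht : 2 ≤ t) (k : ℕ) : k*(t-1) ≤ (k+1)*(t-1)*Nb t k := by
  have h := Nb_ge t ht k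
  calc k*(t-1) ≤ (k+1)*(t-1)*1 := by nlinarith
    _ ≤ (k+1)*(t-1)*Nb t k := Nat.mul_le_mul_left _ h

private lemma Nb_cast (t : ℕ) (ht : 2 ≤ t) : ∀ k, (Nb t k : ℝ) =
    (Nat.factorial k : ℝ) * ((t : ℝ) - 1) ^ k *
        (1 - ∑ s ∈ Finset.Icc 1 (k - 1),
          (s : ℝ) / ((Nat.factorial (s + 1) : ℝ) * ((t : ℝ) - 1) ^ s))
  | 0 => by simp [Nb]
  | (k+1) => by
      have hT : (1:ℝ) ≤ (t:ℝ) - 1 := by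
        have : (2:ℝ) ≤ (t:ℝ) := by exact_mod_cast ht
        linarith
      have hT0 : ((t:ℝ) - 1) ≠ 0 := by linarith
      have hcast : ((t - 1 : ℕ) : ℝ) = (t:ℝ) - 1 := by
        have : 1 ≤ t := by omega
        push_cast [this]; ring
      have hsub := Nb_sub_le t ht k
      have hNb : (Nb t (k+1) : ℝ) = (k+1)*((t:ℝ)-1)*(Nb t k) - k*((t:ℝ)-1) := by
        show (((k+1)*(t-1)*Nb t k - k*(t-1) : ℕ) : ℝ) = _
        rw [Nat.cast_sub hsub]
        push_cast [hcast]
        ring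
      rw [hNb, Nb_cast t ht k]
      rcases Nat.eq_zero_or_pos k with hk0 | hkpos
      · subst hk0
        simp [Nat.factorial]
      · obtain ⟨m, rfl⟩ : ∃ m, k = m + 1 := ⟨k - 1, by omega⟩
        have hIcc : ∑ s ∈ Finset.Icc 1 (m + 1 + 1 - 1),
              (s : ℝ) / ((Nat.factorial (s + 1) : ℝ) * ((t : ℝ) - 1) ^ s)
            = (∑ s ∈ Finset.Icc 1 (m + 1 - 1),
              (s : ℝ) / ((Nat.factorial (s + 1) : ℝ) * ((t : ℝ) - 1) ^ s))
              + (m+1 : ℝ) / ((Nat.factorial (m + 2) : ℝ) * ((t : ℝ) - 1) ^ (m+1)) := by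
          simp only [Nat.add_sub_cancel]
          exact_mod_cast Finset.sum_Icc_succ_top (by omega) _
        rw [hIcc]
        generalize (∑ s ∈ Finset.Icc 1 (m + 1 - 1),
              (s : ℝ) / ((Nat.factorial (s + 1) : ℝ) * ((t : ℝ) - 1) ^ s)) = X
        have hF : (Nat.factorial (m+1) : ℝ) ≠ 0 := by positivity
        have hpow : ((t:ℝ)-1)^(m+1) ≠ 0 := pow_ne_zero _ hT0
        have e1 : (Nat.factorial (m+1+1) : ℝ) = ((m:ℝ)+2) * (Nat.factorial (m+1) : ℝ) := by
          rw [Nat.factorial_succ]; push_cast; ring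
        rw [e1]
        generalize (Nat.factorial (m+1) : ℝ) = F at hF
        have hm2 : ((m:ℝ)+2) ≠ 0 := by positivity
        field_simp
        push_cast
        ring

private lemma key {α : Type*} [DecidableEq α] (t : ℕ) (ht : 2 ≤ t) :
    ∀ k (𝓕 : Finset (Finset α)), (∀ F ∈ 𝓕, F.card = k) → Nb t k < 𝓕.card →
    ∃ f : Fin t → Finset α, Function.Injective f ∧ (∀ i, f i ∈ 𝓕) ∧
      ∃ C, ∀ i j, i ≠ j → f i ∩ f j = C
  | 0, 𝓕, hu, hc => by
      exfalso
      have hsub : 𝓕 ⊆ {∅} := fun F hF =>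
        Finset.mem_singleton.mpr (Finset.card_eq_zero.mp (hu F hF))
      have h1 := Finset.card_le_card hsub
      simp only [Finset.card_singleton] at h1
      have : Nb t 0 = 1 := rfl
      omega
  | (k+1), 𝓕, hu, hc => by
      classical
      set 𝒞 := 𝓕.powerset.filter (fun S => ∀ A ∈ S, ∀ B ∈ S, A ≠ B → A ∩ B = ∅) with h𝒞
      have hne : 𝒞.Nonempty := ⟨∅, by simp [h𝒞]⟩
      obtain ⟨S, hS𝒞, hSmax⟩ := Finset.exists_max_image 𝒞 Finset.card hne
      rw [h𝒞, Finset.mem_filter, Finset.mem_powerset] at hS𝒞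
      obtain ⟨hS𝓕, hSdisj⟩ := hS𝒞
      by_cases hts : t ≤ S.card
      · -- t pairwise disjoint sets: sunflower with empty core
        obtain ⟨T, hTS, hTcard⟩ := Finset.exists_subset_card_eq hts
        set e := T.equivFin with he
        refine ⟨fun i => (e.symm (Fin.cast hTcard.symm i) : Finset α), ?_, ?_, ⟨∅, ?_⟩⟩
        · intro i j hij
          have h2 : e.symm (Fin.cast hTcard.symm i) = e.symm (Fin.cast hTcard.symm j) :=
            Subtype.ext hij
          have h3 := e.symm.injective h2
          exact Fin.ext (by simpa using congrArg Fin.val h3)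
        · intro i
          exact hS𝓕 (hTS (e.symm (Fin.cast hTcard.symm i)).2)
        · intro i j hij
          have hne1 : ((e.symm (Fin.cast hTcard.symm i) : Finset α))
              ≠ ((e.symm (Fin.cast hTcard.symm j) : Finset α)) := by
            intro h
            exact hij (Fin.ext (by simpa using congrArg Fin.val (e.symm.injective (Subtype.ext h))))
          exact hSdisj _ (hTS (e.symm (Fin.cast hTcard.symm i)).2)
            _ (hTS (e.symm (Fin.cast hTcard.symm j)).2) hne1
      · push_neg at hts
        set Y := S.biUnion id with hY
        have hmeet : ∀ F ∈ 𝓕, (F ∩ Y).Nonempty := by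
          intro F hF
          by_contra hcon
          rw [Finset.not_nonempty_iff_eq_empty] at hcon
          by_cases hFS : F ∈ S
          · have hFY : F ⊆ Y := Finset.subset_biUnion_of_mem id hFS
            have hFne : F.Nonempty := Finset.card_pos.mp (by rw [hu F hF]; omega)
            rw [Finset.inter_eq_left.mpr hFY] at hcon
            exact hFne.ne_empty hcon
          · have hmem : insert F S ∈ 𝒞 := by
              rw [h𝒞, Finset.mem_filter, Finset.mem_powerset]
              refine ⟨Finset.insert_subset hF hS𝓕, ?_⟩
              intro A hA B hB hAB
              rcases Finset.mem_insert.mp hA with rfl | hA' <;>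
                rcases Finset.mem_insert.mp hB with rfl | hB'
              · exact absurd rfl hAB
              · have : A ∩ B ⊆ A ∩ Y :=
                  Finset.inter_subset_inter le_rfl (Finset.subset_biUnion_of_mem id hB')
                rw [hcon] at this
                exact Finset.subset_empty.mp this
              · have : A ∩ B ⊆ B ∩ Y := by
                  rw [Finset.inter_comm]
                  exact Finset.inter_subset_inter le_rfl (Finset.subset_biUnion_of_mem id hA')
                rw [hcon] at this
                exact Finset.subset_empty.mp this
              · exact hSdisj A hA' B hB' hAB
            have := hSmax _ hmem
            rw [Finset.card_insert_of_notMem hFS] at this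
            omega
        -- there is a high-degree element
        have hdeg : ∃ y ∈ Y, Nb t k < (𝓕.filter (fun F => y ∈ F)).card := by
          by_contra hcon
          push_neg at hcon
          have hdouble : ∑ y ∈ Y, (𝓕.filter (fun F => y ∈ F)).card
              = ∑ F ∈ 𝓕, (Y ∩ F).card := by
            have h1 : ∀ y : α, (𝓕.filter (fun F => y ∈ F)).card
                = ∑ F ∈ 𝓕, if y ∈ F then 1 else 0 := fun y => Finset.card_filter _ _
            have h2 : ∀ F : Finset α, (Y ∩ F).card = ∑ y ∈ Y, if y ∈ F then 1 else 0 := by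
              intro F
              rw [← Finset.filter_mem_eq_inter]
              exact Finset.card_filter _ _
            simp_rw [h1, h2]
            exact Finset.sum_comm
          have hsum_le : ∑ y ∈ Y, (𝓕.filter (fun F => y ∈ F)).card ≤ Y.card * Nb t k := by
            calc ∑ y ∈ Y, (𝓕.filter (fun F => y ∈ F)).card ≤ ∑ _y ∈ Y, Nb t k :=
                  Finset.sum_le_sum (fun y hy => hcon y hy)
              _ = Y.card * Nb t k := by rw [Finset.sum_const, smul_eq_mul]
          have hYcard : Y.card ≤ S.card * (k+1) := by
            calc Y.card ≤ ∑ A ∈ S, (id A).card := hY ▸ Finset.card_biUnion_le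
              _ = ∑ A ∈ S, (k+1) := Finset.sum_congr rfl (fun A hA => hu A (hS𝓕 hA))
              _ = S.card * (k+1) := by rw [Finset.sum_const, smul_eq_mul]
          have hlower : 𝓕.card + k * S.card ≤ ∑ F ∈ 𝓕, (Y ∩ F).card := by
            rw [← Finset.sum_sdiff hS𝓕]
            have h1 : (𝓕 \ S).card ≤ ∑ F ∈ 𝓕 \ S, (Y ∩ F).card := by
              calc (𝓕 \ S).card = ∑ _F ∈ 𝓕 \ S, 1 := by simp
                _ ≤ ∑ F ∈ 𝓕 \ S, (Y ∩ F).card := Finset.sum_le_sum (fun F hF => by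
                    have := hmeet F (Finset.mem_sdiff.mp hF).1
                    rw [Finset.inter_comm] at this
                    exact Finset.card_pos.mpr this)
            have h2 : ∑ F ∈ S, (Y ∩ F).card = S.card * (k+1) := by
              rw [Finset.sum_congr rfl (fun F hF => ?_), Finset.sum_const, smul_eq_mul]
              rw [Finset.inter_comm,
                Finset.inter_eq_left.mpr (hY ▸ Finset.subset_biUnion_of_mem id hF)]
              exact hu F (hS𝓕 hF)
            have hsc : S.card ≤ 𝓕.card := Finset.card_le_card hS𝓕
            have hsd : (𝓕 \ S).card = 𝓕.card - S.card := Finset.card_sdiff_of_subset hS𝓕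
            have e1 : S.card * (k+1) = k * S.card + S.card := by ring
            rw [h2, e1]
            rw [hsd] at h1
            omega
          have hN := Nb_ge t ht k
          have hsub := Nb_sub_le t ht k
          have g1 : (𝓕.card : ℤ) + k * S.card ≤ (S.card : ℤ) * (k+1) * Nb t k := by
            have hh : ∑ F ∈ 𝓕, (Y ∩ F).card ≤ S.card * (k+1) * Nb t k := by
              calc ∑ F ∈ 𝓕, (Y ∩ F).card
                  = ∑ y ∈ Y, (𝓕.filter (fun F => y ∈ F)).card := hdouble.symm
                _ ≤ Y.card * Nb t k := hsum_le
                _ ≤ S.card * (k+1) * Nb t k := Nat.mul_le_mul_right _ hYcard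
            have h3 : 𝓕.card + k * S.card ≤ S.card * (k+1) * Nb t k :=
              le_trans hlower (by omega)
            exact_mod_cast h3
          have g5 : (S.card : ℤ) ≤ (t : ℤ) - 1 := by
            have h0 : S.card ≤ t - 1 := by omega
            have h1t : 1 ≤ t := by omega
            have := (Nat.cast_le (α := ℤ)).mpr h0
            push_cast [h1t] at this
            omega
          have g6 : (1 : ℤ) ≤ (Nb t k : ℤ) := by exact_mod_cast hN
          have g7 : (Nb t (k+1) : ℤ) = ((k:ℤ)+1) * ((t:ℤ)-1) * Nb t k - k * ((t:ℤ)-1) := by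
            show (((k+1)*(t-1)*Nb t k - k*(t-1) : ℕ) : ℤ) = _
            rw [Nat.cast_sub hsub]
            have h1t : 1 ≤ t := by omega
            push_cast [h1t]
            ring
          have g8 : (Nb t (k+1) : ℤ) < (𝓕.card : ℤ) := by exact_mod_cast hc
          have g9 : (0:ℤ) ≤ ((t:ℤ) - 1 - S.card) * (((k:ℤ)+1) * Nb t k - k) := by
            apply mul_nonneg
            · linarith
            · nlinarith [g6, (show (0:ℤ) ≤ (k:ℤ) from by positivity)]
          nlinarith [g1, g5, g6, g7, g8, g9]
        obtain ⟨y, hyY, hdegy⟩ := hdeg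
        -- pass to the link of y
        set 𝓛 := (𝓕.filter (fun F => y ∈ F)).image (fun F => F.erase y) with h𝓛
        have hinj : Set.InjOn (fun F : Finset α => F.erase y) ↑(𝓕.filter (fun F => y ∈ F)) := by
          intro A hA B hB hAB
          simp only [Finset.coe_filter, Set.mem_setOf_eq] at hA hB
          rw [← Finset.insert_erase hA.2, ← Finset.insert_erase hB.2]
          simp only at hAB
          rw [hAB]
        have h𝓛card : 𝓛.card = (𝓕.filter (fun F => y ∈ F)).card :=
          Finset.card_image_of_injOn hinj
        have h𝓛uniform : ∀ G ∈ 𝓛, G.card = k := by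
          intro G hG
          obtain ⟨F, hF, rfl⟩ := Finset.mem_image.mp hG
          obtain ⟨hF𝓕, hyF⟩ := Finset.mem_filter.mp hF
          rw [Finset.card_erase_of_mem hyF, hu F hF𝓕]
          omega
        obtain ⟨g, hginj, hgmem, C, hgC⟩ :=
          key t ht k 𝓛 h𝓛uniform (by rw [h𝓛card]; exact hdegy)
        have hy' : ∀ i, y ∉ g i ∧ insert y (g i) ∈ 𝓕 := by
          intro i
          obtain ⟨F, hF, hFe⟩ := Finset.mem_image.mp (hgmem i)
          obtain ⟨hF𝓕, hyF⟩ := Finset.mem_filter.mp hF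
          constructor
          · rw [← hFe]; exact Finset.notMem_erase y F
          · rw [← hFe, Finset.insert_erase hyF]; exact hF𝓕
        refine ⟨fun i => insert y (g i), ?_, fun i => (hy' i).2, ⟨insert y C, ?_⟩⟩
        · intro i j hij
          apply hginj
          have h1 : (insert y (g i)).erase y = (insert y (g j)).erase y :=
            congrArg (fun s => Finset.erase s y) hij
          rwa [Finset.erase_insert (hy' i).1, Finset.erase_insert (hy' j).1] at h1
        · intro i j hij
          have hC := hgC i j hij
          ext a
          simp only [Finset.mem_inter, Finset.mem_insert]
          constructor
          · rintro ⟨h1 | h1, h2 | h2⟩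
            · exact Or.inl h1
            · exact Or.inl h1
            · exact Or.inl h2
            · exact Or.inr (hC ▸ Finset.mem_inter.mpr ⟨h1, h2⟩)
          · rintro (rfl | hC')
            · exact ⟨Or.inl rfl, Or.inl rfl⟩
            · have := hC ▸ hC'
              have h2 := Finset.mem_inter.mp this
              exact ⟨Or.inr h2.1, Or.inr h2.2⟩

theorem stmt_3 {α : Type*} [DecidableEq α] (k t : ℕ) (hk : 1 ≤ k) (ht : 2 ≤ t)
    (𝓕 : Finset (Finset α))
    (huniform : ∀ F ∈ 𝓕, F.card = k)
    (hcard : (𝓕.card : ℝ) >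
      (Nat.factorial k : ℝ) * ((t : ℝ) - 1) ^ k *
        (1 - ∑ s ∈ Finset.Icc 1 (k - 1),
          (s : ℝ) / ((Nat.factorial (s + 1) : ℝ) * ((t : ℝ) - 1) ^ s))) :
    ∃ f : Fin t → Finset α, Function.Injective f ∧ (∀ i, f i ∈ 𝓕) ∧
      ∀ i j : Fin t, i ≠ j →
        f i ∩ f j = Finset.univ.inf' (Finset.univ_nonempty_iff.mpr ⟨⟨0, by omega⟩⟩) f := by
  have hNb : Nb t k < 𝓕.card := by
    rw [← Nb_cast t ht k] at hcard
    exact_mod_cast hcard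
  obtain ⟨f, hfinj, hfmem, C, hfC⟩ := key t ht k 𝓕 huniform hNb
  refine ⟨f, hfinj, hfmem, ?_⟩
  have hCinf : C = Finset.univ.inf' (Finset.univ_nonempty_iff.mpr ⟨⟨0, by omega⟩⟩) f := by
    apply le_antisymm
    · apply Finset.le_inf'
      intro m _
      -- pick m' ≠ m
      have : ∃ m' : Fin t, m' ≠ m := by
        by_cases hm : m = ⟨0, by omega⟩
        · exact ⟨⟨1, by omega⟩, by subst hm; intro h; simpa using congrArg Fin.val h⟩
        · exact ⟨⟨0, by omega⟩, fun h => hm h.symm⟩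
      obtain ⟨m', hm'⟩ := this
      rw [← hfC m m' (Ne.symm hm')]
      exact Finset.inter_subset_left
    · calc Finset.univ.inf' _ f ≤ f ⟨0, by omega⟩ ⊓ f ⟨1, by omega⟩ :=
            le_inf (Finset.inf'_le _ (Finset.mem_univ _)) (Finset.inf'_le _ (Finset.mem_univ _))
        _ = C := by
            rw [← hfC ⟨0, by omega⟩ ⟨1, by omega⟩ (by intro h; simpa using congrArg Fin.val h)]
            rfl
  intro i j hij
  rw [hfC i j hij, hCinf]
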